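/- Let b < t be real numbers and let t_1, t_2 be vertices of height t and b_1, b_2 be vertices of height b, with t_1 placed to the left of t_2 and b_1 placed to the left of b_2. Let r be a path from t_1 to b_2 and g be a vertex-disjoint path from b_1 to t_2 such that every interior vertex v of r and of g satisfies b < h(v) < t. Then the Reeb graph consisting of the two paths r and g admits a drawing, respecting these endpoint placements, with exactly one crossing (and any such drawing has at least one crossing). -/

import Mathlib

open Set

/-- A drawing of a Reeb graph `(G, h)`: every vertex `v` is placed at the point
`(x v, h v)` in the plane (distinct vertices at distinct points), and every edge
`{v, w}` of `G` is drawn as the graph of a continuous function of the `y`-coordinate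
over the height interval of its two endpoints; such a curve is a continuous
`y`-monotone curve joining the images of the endpoints (it meets every horizontal
line in at most one point). -/
structure ReebDrawing {V : Type*} (G : SimpleGraph V) (h : V → ℝ) where
  /-- the `x`-coordinate of each vertex -/
  x : V → ℝ
  /-- distinct vertices are mapped to distinct points -/
  inj : Function.Injective fun v => ((x v, h v) : ℝ × ℝ)
  /-- for each edge, the `x`-coordinate of its curve as a function of the height `y` -/
  curve : Sym2 V → ℝ → ℝ
  curve_cont : ∀ e ∈ G.edgeSet, Continuous (curve e)
  curve_end : ∀ v w : V, G.Adj v w → curve s(v, w) (h v) = x v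

namespace ReebDrawing

variable {V : Type*} {G : SimpleGraph V} {h : V → ℝ}

/-- The point of the plane where the vertex `v` is drawn. -/
def pos (D : ReebDrawing G h) (v : V) : ℝ × ℝ := (D.x v, h v)

/-- The set of points of the curve drawn for the edge `{v, w}`. -/
def edgeCurve (D : ReebDrawing G h) (v w : V) : Set (ℝ × ℝ) :=
  {p | p.2 ∈ Set.uIcc (h v) (h w) ∧ p.1 = D.curve s(v, w) p.2}

/-- `p` is a crossing point of the two distinct edges `{v, w}` and `{v', w'}`:
it lies on both curves and is not the image of a shared endpoint. -/
def IsCrossing (D : ReebDrawing G h) (p : ℝ × ℝ) (v w v' w' : V) : Prop :=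
  G.Adj v w ∧ G.Adj v' w' ∧ s(v, w) ≠ s(v', w') ∧
    p ∈ D.edgeCurve v w ∧ p ∈ D.edgeCurve v' w' ∧
    ∀ u : V, (u = v ∨ u = w) → (u = v' ∨ u = w') → p ≠ D.pos u

/-- The set of crossings of a drawing: an unordered pair of (distinct) edges together
with a crossing point of these two edges. -/
def crossingSet (D : ReebDrawing G h) : Set (Sym2 (Sym2 V) × (ℝ × ℝ)) :=
  {q | ∃ v w v' w', q.1 = s(s(v, w), s(v', w')) ∧ D.IsCrossing q.2 v w v' w'}

/-- The number of crossings of a drawing, counted over all pairs of edges. -/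
noncomputable def numCrossings (D : ReebDrawing G h) : ℕ∞ := D.crossingSet.encard

/-- The crossings involving the fixed edge `e₀`: the other edge together with the
crossing point. -/
def edgeCrossings (D : ReebDrawing G h) (e₀ : Sym2 V) : Set (Sym2 V × (ℝ × ℝ)) :=
  {q | ∃ v w v' w', s(v, w) = e₀ ∧ q.1 = s(v', w') ∧ D.IsCrossing q.2 v w v' w'}

/-- The edge `{v, w}` is drawn as a straight line segment. -/
def Straight (D : ReebDrawing G h) (v w : V) : Prop :=
  ∀ y ∈ Set.uIcc (h v) (h w),
    D.curve s(v, w) y = D.x v + (y - h v) * (D.x w - D.x v) / (h w - h v)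

/-- The edge `{v, w}` is drawn as an `xy`-monotone curve: besides meeting every
horizontal line at most once (which holds by construction), it meets every vertical
line at most once. -/
def XYMonotone (D : ReebDrawing G h) (v w : V) : Prop :=
  Set.InjOn (D.curve s(v, w)) (Set.uIcc (h v) (h w))

/-- Edge `{v, w}` is (strictly) left of edge `{v', w'}`: at every height in the
interior of the common `y`-interval, the point of the first curve has strictly
smaller `x`-coordinate. -/
def LeftOf (D : ReebDrawing G h) (v w v' w' : V) : Prop :=
  ∀ y ∈ interior (Set.uIcc (h v) (h w) ∩ Set.uIcc (h v') (h w')),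
    D.curve s(v, w) y < D.curve s(v', w') y

end ReebDrawing

/-- The Reeb graph crossing number: the minimum number of crossings over all
drawings of `(G, h)`. -/
noncomputable def RGCN {V : Type*} (G : SimpleGraph V) (h : V → ℝ) : ℕ∞ :=
  ⨅ D : ReebDrawing G h, D.numCrossings

/-- The number of neighbours of `v` of strictly smaller height. -/
noncomputable def downDeg {V : Type*} (G : SimpleGraph V) (h : V → ℝ) (v : V) : ℕ :=
  {w | G.Adj v w ∧ h w < h v}.ncard

/-- The number of neighbours of `v` of strictly larger height. -/
noncomputable def upDeg {V : Type*} (G : SimpleGraph V) (h : V → ℝ) (v : V) : ℕ :=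
  {w | G.Adj v w ∧ h v < h w}.ncard

/-- A generic Reeb graph: all vertex heights are distinct, every vertex has degree
`1` or `3`, and every vertex has at most `2` lower and at most `2` higher neighbours. -/
def IsGenericReeb {V : Type*} (G : SimpleGraph V) (h : V → ℝ) : Prop :=
  Function.Injective h ∧
  (∀ v : V, (G.neighborSet v).ncard = 1 ∨ (G.neighborSet v).ncard = 3) ∧
  (∀ v : V, downDeg G h v ≤ 2 ∧ upDeg G h v ≤ 2)

/-- A subdivided Reeb graph: every edge joins vertices at consecutive levels (distinct
heights with no vertex height strictly in between), every vertex has degree at most `3`,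
with at most `2` lower and at most `2` higher neighbours. -/
def IsSubdividedReeb {V : Type*} (G : SimpleGraph V) (h : V → ℝ) : Prop :=
  (∀ v w : V, G.Adj v w → h v ≠ h w ∧
    ∀ u : V, h u ∉ Set.Ioo (min (h v) (h w)) (max (h v) (h w))) ∧
  (∀ v : V, (G.neighborSet v).ncard ≤ 3 ∧ downDeg G h v ≤ 2 ∧ upDeg G h v ≤ 2)

/-- `G` is the cycle graph on the enumeration `e` of its vertex set: adjacency holds
exactly between cyclically consecutive vertices. -/
def IsCycleEnum {V : Type*} {n : ℕ} (G : SimpleGraph V) (e : Fin n ≃ V) : Prop :=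
  ∀ i j : Fin n, G.Adj (e i) (e j) ↔ ((i.val + 1) % n = j.val ∨ (j.val + 1) % n = i.val)

/-- A caterpillar: a tree together with a central path (the spine) such that every
vertex is on the spine or adjacent to a spine vertex. -/
def IsCaterpillar {V : Type*} (G : SimpleGraph V) : Prop :=
  G.IsTree ∧ ∃ (n : ℕ) (s : Fin n → V),
    Function.Injective s ∧
    (∀ (i : ℕ) (hi : i + 1 < n), G.Adj (s ⟨i, Nat.lt_of_succ_lt hi⟩) (s ⟨i + 1, hi⟩)) ∧
    (∀ v : V, v ∈ Set.range s ∨ ∃ i : Fin n, G.Adj v (s i))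

section Helpers
variable {V : Type*}

noncomputable def lineS (x h : V → ℝ) : Sym2 V → ℝ → ℝ :=
  Sym2.lift ⟨fun v w => fun y => ((h w - y) * x v + (y - h v) * x w) / (h w - h v), by
    intro v w
    funext y
    rcases eq_or_ne (h v) (h w) with e | e
    · simp only []
      rw [e]; simp
    · rw [div_eq_div_iff (sub_ne_zero.2 (Ne.symm e)) (sub_ne_zero.2 e)]; ring⟩

lemma lineS_mk (x h : V → ℝ) (v w : V) (y : ℝ) :
    lineS x h s(v, w) y = ((h w - y) * x v + (y - h v) * x w) / (h w - h v) := rfl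

lemma lineS_cont (x h : V → ℝ) (e : Sym2 V) : Continuous (lineS x h e) := by
  induction e using Sym2.ind with
  | _ v w =>
    have : lineS x h s(v, w) =
        fun y => ((h w - y) * x v + (y - h v) * x w) * (h w - h v)⁻¹ := by
      funext y; rw [lineS_mk, div_eq_mul_inv]
    rw [this]
    fun_prop

lemma lineS_end (x h : V → ℝ) {v w : V} (hvw : h v ≠ h w) :
    lineS x h s(v, w) (h v) = x v := by
  rw [lineS_mk]
  field_simp
  ring

lemma lineS_mem (x h : V → ℝ) {v w : V} {y : ℝ} (hvw : h v ≠ h w)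
    (hy : y ∈ uIcc (h v) (h w)) : lineS x h s(v, w) y ∈ uIcc (x v) (x w) := by
  rw [lineS_mk]
  rw [Set.mem_uIcc] at hy ⊢
  rcases hy with ⟨h1, h2⟩ | ⟨h1, h2⟩
  · have hd : 0 < h w - h v := by
      rcases lt_or_eq_of_le (h1.trans h2) with h | h
      · linarith
      · exact (hvw h).elim
    rcases le_total (x v) (x w) with hx | hx
    · left
      refine ⟨?_, ?_⟩
      · rw [le_div_iff₀ hd]; nlinarith
      · rw [div_le_iff₀ hd]; nlinarith
    · right
      refine ⟨?_, ?_⟩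
      · rw [le_div_iff₀ hd]; nlinarith
      · rw [div_le_iff₀ hd]; nlinarith
  · have hd : h w - h v < 0 := by
      rcases lt_or_eq_of_le (h1.trans h2) with h | h
      · linarith
      · exact (hvw h.symm).elim
    rcases le_total (x v) (x w) with hx | hx
    · left
      refine ⟨?_, ?_⟩
      · rw [le_div_iff_of_neg hd]; nlinarith
      · rw [div_le_iff_of_neg hd]; nlinarith
    · right
      refine ⟨?_, ?_⟩
      · rw [le_div_iff_of_neg hd]; nlinarith
      · rw [div_le_iff_of_neg hd]; nlinarith

lemma lineS_eq_left {x h : V → ℝ} {v w : V} {y : ℝ} (hvw : h v ≠ h w) (hx : x v ≠ x w)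
    (hv : lineS x h s(v, w) y = x v) : y = h v := by
  rw [lineS_mk, div_eq_iff (sub_ne_zero.2 (Ne.symm hvw))] at hv
  have : (y - h v) * (x w - x v) = 0 := by linarith [hv]
  rcases mul_eq_zero.1 this with h' | h'
  · linarith
  · exact absurd (by linarith : x v = x w) hx

end Helpers

namespace ReebDrawing

variable {V : Type*} {G : SimpleGraph V} {h : V → ℝ}

lemma edgeCurve_congr (D : ReebDrawing G h) {v w a c : V} (he : s(v, w) = s(a, c)) :
    D.edgeCurve v w = D.edgeCurve a c := by
  rcases Sym2.eq_iff.1 he with ⟨rfl, rfl⟩ | ⟨rfl, rfl⟩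
  · rfl
  · unfold edgeCurve
    rw [Sym2.eq_swap, Set.uIcc_comm]


end ReebDrawing

lemma or_congr_of_sym2 {V : Type*} {v w a c u : V} (he : s(v, w) = s(a, c)) :
    (u = v ∨ u = w) ↔ (u = a ∨ u = c) := by
  rcases Sym2.eq_iff.1 he with ⟨rfl, rfl⟩ | ⟨rfl, rfl⟩ <;> tauto


lemma mem_uIcc_minmax {y a b : ℝ} (h1 : min a b ≤ y) (h2 : y ≤ max a b) : y ∈ Set.uIcc a b := by
  rcases le_total a b with hab | hab
  · rw [min_eq_left hab] at h1
    rw [max_eq_right hab] at h2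
    exact Set.mem_uIcc.2 (Or.inl ⟨h1, h2⟩)
  · rw [min_eq_right hab] at h1
    rw [max_eq_left hab] at h2
    exact Set.mem_uIcc.2 (Or.inr ⟨h1, h2⟩)

lemma uIcc_minmax {y a b : ℝ} (h : y ∈ Set.uIcc a b) : min a b ≤ y ∧ y ≤ max a b := by
  rcases Set.mem_uIcc.1 h with ⟨h1, h2⟩ | ⟨h1, h2⟩
  · exact ⟨le_trans (min_le_left _ _) h1, le_trans h2 (le_max_right _ _)⟩
  · exact ⟨le_trans (min_le_right _ _) h1, le_trans h2 (le_max_left _ _)⟩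

lemma span_iff_low {y y₀ δ l hh : ℝ} (hδ1 : -δ < y - y₀) (hc : y ≤ y₀)
    (hl : l = y₀ ∨ δ ≤ |l - y₀|) (hh' : hh = y₀ ∨ δ ≤ |hh - y₀|) :
    (l < y ∧ y ≤ hh) ↔ (l < y₀ ∧ y₀ ≤ hh) := by
  constructor
  · rintro ⟨h1, h2⟩
    refine ⟨lt_of_lt_of_le h1 hc, ?_⟩
    rcases hh' with he | he
    · exact he.ge
    · rcases le_or_gt y₀ hh with h' | h'
      · exact h'
      · exfalso
        rw [abs_of_neg (by linarith : hh - y₀ < 0)] at he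
        linarith
  · rintro ⟨h1, h2⟩
    refine ⟨?_, le_trans hc h2⟩
    rcases hl with he | he
    · exact absurd (he ▸ h1) (lt_irrefl _)
    · rw [abs_of_neg (by linarith : l - y₀ < 0)] at he
      linarith

lemma span_iff_high {y y₀ δ l hh : ℝ} (hδ2 : y - y₀ < δ) (hc : y₀ < y)
    (hl : l = y₀ ∨ δ ≤ |l - y₀|) (hh' : hh = y₀ ∨ δ ≤ |hh - y₀|) :
    (l < y ∧ y ≤ hh) ↔ (l ≤ y₀ ∧ y₀ < hh) := by
  constructor
  · rintro ⟨h1, h2⟩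
    refine ⟨?_, lt_of_lt_of_le hc h2⟩
    rcases hl with he | he
    · exact he.le
    · rcases le_or_gt l y₀ with h' | h'
      · exact h'
      · exfalso
        rw [abs_of_pos (by linarith : 0 < l - y₀)] at he
        linarith
  · rintro ⟨h1, h2⟩
    refine ⟨lt_of_le_of_lt h1 hc, ?_⟩
    rcases hh' with he | he
    · exact absurd (he ▸ h2) (lt_irrefl _)
    · rw [abs_of_pos (by linarith : 0 < hh - y₀)] at he
      linarith

lemma sign_const {f : ℝ → ℝ} {a c : ℝ} (hf : ContinuousOn f (Set.uIcc a c))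
    (h0 : ∀ y ∈ Set.uIcc a c, f y ≠ 0) : (0 < f a ↔ 0 < f c) := by
  have main : ∀ {u v : ℝ}, ContinuousOn f (Set.uIcc u v) → (∀ y ∈ Set.uIcc u v, f y ≠ 0) →
      0 < f u → 0 < f v := by
    intro u v hf' h0' hu
    by_contra hv
    have hv' : f v < 0 := lt_of_le_of_ne (not_lt.1 hv) (h0' v Set.right_mem_uIcc)
    have h00 : (0:ℝ) ∈ Set.uIcc (f u) (f v) := by
      rw [Set.mem_uIcc]
      right
      exact ⟨hv'.le, hu.le⟩
    obtain ⟨z, hz, hz0⟩ := intermediate_value_uIcc hf' h00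
    exact h0' z hz hz0
  constructor
  · exact main hf h0
  · intro hc
    exact main (by rwa [Set.uIcc_comm]) (fun y hy => h0 y (by rwa [Set.uIcc_comm] at hy)) hc

lemma ind_flip {y₀ l hh : ℝ} (hlh : l < hh) :
    (if l ≤ y₀ ∧ y₀ < hh then (1 : ZMod 2) else 0)
      = (if l < y₀ ∧ y₀ ≤ hh then (1 : ZMod 2) else 0)
        + (if l = y₀ ∨ hh = y₀ then (1 : ZMod 2) else 0) := by
  rcases lt_trichotomy y₀ l with c1 | c1 | c1 <;> rcases lt_trichotomy y₀ hh with c2 | c2 | c2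
  · rw [if_neg (by rintro ⟨a1, a2⟩; linarith), if_neg (by rintro ⟨a1, a2⟩; linarith),
      if_neg (by rintro (h9 | h9) <;> linarith)]
    decide
  · exact absurd rfl (by intro _; linarith : ¬ (y₀ = y₀))
  · exact absurd rfl (by intro _; linarith : ¬ (y₀ = y₀))
  · rw [if_pos ⟨le_of_eq c1.symm, by linarith⟩, if_neg (by rintro ⟨a1, a2⟩; linarith),
      if_pos (Or.inl c1.symm)]
    decide
  · exact absurd rfl (by intro _; linarith : ¬ (y₀ = y₀))
  · exact absurd rfl (by intro _; linarith : ¬ (y₀ = y₀))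
  · rw [if_pos ⟨c1.le, c2⟩, if_pos ⟨c1, c2.le⟩, if_neg (by rintro (h9 | h9) <;> linarith)]
    decide
  · rw [if_neg (by rintro ⟨a1, a2⟩; linarith), if_pos ⟨c1, le_of_eq c2⟩, if_pos (Or.inr c2.symm)]
    decide
  · rw [if_neg (by rintro ⟨a1, a2⟩; linarith), if_neg (by rintro ⟨a1, a2⟩; linarith),
      if_neg (by rintro (h9 | h9) <;> linarith)]
    decide

lemma sum_flip_zmod2 {y₀ : ℝ} {n : ℕ} (hgt : ℕ → ℝ) (xv : ℕ → ℝ) (cv : ℕ → ℝ)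
    (F : ℝ → ZMod 2)
    (hends : ∀ i, i < n → (hgt i = y₀ → cv i = xv i) ∧ (hgt (i + 1) = y₀ → cv i = xv (i + 1)))
    (hneq : ∀ i, i < n → hgt i ≠ hgt (i + 1))
    (hfirst : hgt 0 ≠ y₀) (hlast : hgt n ≠ y₀) :
    ∑ i ∈ Finset.range n,
        (if min (hgt i) (hgt (i + 1)) ≤ y₀ ∧ y₀ < max (hgt i) (hgt (i + 1)) then (1 : ZMod 2)
          else 0) * F (cv i)
      = ∑ i ∈ Finset.range n,
          (if min (hgt i) (hgt (i + 1)) < y₀ ∧ y₀ ≤ max (hgt i) (hgt (i + 1)) then (1 : ZMod 2)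
            else 0) * F (cv i) := by
  classical
  have hmm : ∀ i ∈ Finset.range n,
      (if min (hgt i) (hgt (i + 1)) ≤ y₀ ∧ y₀ < max (hgt i) (hgt (i + 1)) then (1 : ZMod 2)
        else 0) * F (cv i)
      = (if min (hgt i) (hgt (i + 1)) < y₀ ∧ y₀ ≤ max (hgt i) (hgt (i + 1)) then (1 : ZMod 2)
          else 0) * F (cv i)
        + (if min (hgt i) (hgt (i + 1)) = y₀ ∨ max (hgt i) (hgt (i + 1)) = y₀ then (1 : ZMod 2)
            else 0) * F (cv i) := by
    intro i hii
    rw [ind_flip (min_lt_max.2 (hneq i (Finset.mem_range.1 hii))), add_mul]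
  rw [Finset.sum_congr rfl hmm, Finset.sum_add_distrib]
  have hmm2 : ∀ i ∈ Finset.range n,
      (if min (hgt i) (hgt (i + 1)) = y₀ ∨ max (hgt i) (hgt (i + 1)) = y₀ then (1 : ZMod 2)
        else 0) * F (cv i)
      = (if hgt i = y₀ ∨ hgt (i + 1) = y₀ then (1 : ZMod 2) else 0) * F (cv i) := by
    intro i _
    congr 1
    apply if_congr _ rfl rfl
    rcases le_total (hgt i) (hgt (i + 1)) with hle | hle
    · rw [min_eq_left hle, max_eq_right hle]
    · rw [min_eq_right hle, max_eq_left hle]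
      exact or_comm
  rw [Finset.sum_congr rfl hmm2]
  have hE0 : ∑ i ∈ Finset.range n,
      (if hgt i = y₀ ∨ hgt (i + 1) = y₀ then (1 : ZMod 2) else 0) * F (cv i) = 0 := by
    have : ∀ i ∈ Finset.range n,
        (if hgt i = y₀ ∨ hgt (i + 1) = y₀ then (1 : ZMod 2) else 0) * F (cv i)
        = if hgt i = y₀ ∨ hgt (i + 1) = y₀ then F (cv i) else 0 := by
      intro i _
      split_ifs
      · rw [one_mul]
      · rw [zero_mul]
    rw [Finset.sum_congr rfl this, ← Finset.sum_filter]
    set s := (Finset.range n).filter (fun i => hgt i = y₀ ∨ hgt (i + 1) = y₀) with hsdef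
    have hmem : ∀ i ∈ s, i < n ∧ (hgt i = y₀ ∨ hgt (i + 1) = y₀) := by
      intro i hii
      rw [hsdef, Finset.mem_filter, Finset.mem_range] at hii
      exact hii
    have hmem' : ∀ i, i < n → (hgt i = y₀ ∨ hgt (i + 1) = y₀) → i ∈ s := by
      intro i h1 h2
      rw [hsdef, Finset.mem_filter, Finset.mem_range]
      exact ⟨h1, h2⟩
    refine Finset.sum_involution (fun a _ => if hgt a = y₀ then a - 1 else a + 1) ?_ ?_ ?_ ?_
    · -- f a + f (g a) = 0
      intro a ha
      obtain ⟨han, haE⟩ := hmem a ha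
      by_cases hA : hgt a = y₀
      · have ha1 : 1 ≤ a := by
          rcases Nat.eq_zero_or_pos a with rfl | hpos
          · exact absurd hA hfirst
          · exact hpos
        simp only [if_pos hA]
        have hv1 : cv a = xv a := (hends a han).1 hA
        have hv2 : cv (a - 1) = xv a := by
          have := (hends (a - 1) (by omega)).2
          rw [show a - 1 + 1 = a from by omega] at this
          exact this hA
        rw [hv1, hv2, CharTwo.add_self_eq_zero]
      · have hB : hgt (a + 1) = y₀ := haE.resolve_left hA
        simp only [if_neg hA]
        have han1 : a + 1 < n := by
          rcases Nat.lt_or_ge (a + 1) n with h' | h'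
          · exact h'
          · exfalso
            have : a + 1 = n := by omega
            rw [this] at hB
            exact hlast hB
        have hv1 : cv a = xv (a + 1) := (hends a han).2 hB
        have hv2 : cv (a + 1) = xv (a + 1) := (hends (a + 1) han1).1 hB
        rw [hv1, hv2, CharTwo.add_self_eq_zero]
    · -- g a ≠ a
      intro a ha _
      obtain ⟨han, haE⟩ := hmem a ha
      by_cases hA : hgt a = y₀
      · have ha1 : 1 ≤ a := by
          rcases Nat.eq_zero_or_pos a with rfl | hpos
          · exact absurd hA hfirst
          · exact hpos
        simp only [if_pos hA]
        omega
      · simp only [if_neg hA]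
        omega
    · -- g a ∈ s
      intro a ha
      obtain ⟨han, haE⟩ := hmem a ha
      by_cases hA : hgt a = y₀
      · have ha1 : 1 ≤ a := by
          rcases Nat.eq_zero_or_pos a with rfl | hpos
          · exact absurd hA hfirst
          · exact hpos
        simp only [if_pos hA]
        refine hmem' _ (by omega) (Or.inr ?_)
        rw [show a - 1 + 1 = a from by omega]
        exact hA
      · have hB : hgt (a + 1) = y₀ := haE.resolve_left hA
        have han1 : a + 1 < n := by
          rcases Nat.lt_or_ge (a + 1) n with h' | h'
          · exact h'
          · exfalso
            have : a + 1 = n := by omega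
            rw [this] at hB
            exact hlast hB
        simp only [if_neg hA]
        exact hmem' _ han1 (Or.inl hB)
    · -- involution
      intro a ha
      obtain ⟨han, haE⟩ := hmem a ha
      by_cases hA : hgt a = y₀
      · have ha1 : 1 ≤ a := by
          rcases Nat.eq_zero_or_pos a with rfl | hpos
          · exact absurd hA hfirst
          · exact hpos
        simp only [if_pos hA]
        have hprev : hgt (a - 1) ≠ y₀ := by
          intro hcc
          have := hneq (a - 1) (by omega)
          rw [show a - 1 + 1 = a from by omega] at this
          exact this (hcc.trans hA.symm)
        simp only [if_neg hprev]
        omega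
      · have hB : hgt (a + 1) = y₀ := haE.resolve_left hA
        simp only [if_neg hA, if_pos hB]
        omega
  rw [hE0, add_zero]



set_option maxHeartbeats 1000000 in
/-- Let `b < t` be real numbers, let `t₁ = r 0` and `t₂ = g (q-1)`
be vertices of height `t`, and `b₁ = g 0` and `b₂ = r (p-1)` be vertices of height
`b`. Let `r` be a path from `t₁` to `b₂` and `g` a vertex-disjoint path from `b₁` to
`t₂`, such that every interior vertex of `r` and of `g` has height strictly between
`b` and `t` (and, the paths being part of a Reeb graph, adjacent vertices have
distinct heights). Then the Reeb graph consisting of the two paths `r` and `g`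
admits a drawing, respecting the endpoint placements (`t₁` left of `t₂` and `b₁`
left of `b₂`), with exactly one crossing; and every drawing respecting these
placements has at least one crossing. -/
theorem two_paths_one_crossing
    {V : Type*} [Fintype V] (G : SimpleGraph V) (h : V → ℝ)
    (b t : ℝ) (hbt : b < t)
    (p q : ℕ) (hp : 2 ≤ p) (hq : 2 ≤ q)
    (r : Fin p → V) (g : Fin q → V)
    (hrinj : Function.Injective r) (hginj : Function.Injective g)
    (hdisj : ∀ i j, r i ≠ g j)
    (hcover : ∀ v : V, (∃ i, r i = v) ∨ (∃ j, g j = v))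
    (hadj : ∀ a c : V, G.Adj a c ↔
      ((∃ (i : ℕ) (hi : i + 1 < p),
          s(r ⟨i, Nat.lt_of_succ_lt hi⟩, r ⟨i + 1, hi⟩) = s(a, c)) ∨
       (∃ (j : ℕ) (hj : j + 1 < q),
          s(g ⟨j, Nat.lt_of_succ_lt hj⟩, g ⟨j + 1, hj⟩) = s(a, c))))
    (hne : ∀ v w : V, G.Adj v w → h v ≠ h w)
    (hrt : h (r ⟨0, by omega⟩) = t) (hrb : h (r ⟨p - 1, by omega⟩) = b)
    (hgb : h (g ⟨0, by omega⟩) = b) (hgt : h (g ⟨q - 1, by omega⟩) = t)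
    (hrint : ∀ i : Fin p, 0 < i.val → i.val < p - 1 → h (r i) ∈ Set.Ioo b t)
    (hgint : ∀ j : Fin q, 0 < j.val → j.val < q - 1 → h (g j) ∈ Set.Ioo b t) :
    (∃ D : ReebDrawing G h,
        D.x (r ⟨0, by omega⟩) < D.x (g ⟨q - 1, by omega⟩) ∧
        D.x (g ⟨0, by omega⟩) < D.x (r ⟨p - 1, by omega⟩) ∧
        D.numCrossings = 1) ∧
    (∀ D : ReebDrawing G h,
        D.x (r ⟨0, by omega⟩) < D.x (g ⟨q - 1, by omega⟩) →
        D.x (g ⟨0, by omega⟩) < D.x (r ⟨p - 1, by omega⟩) →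
        1 ≤ D.numCrossings) := by
  classical
  -- reindexed vertex sequences
  set rv : ℕ → V := fun i => r ⟨min i (p - 1), by omega⟩ with hrvdef
  set gv : ℕ → V := fun j => g ⟨min j (q - 1), by omega⟩ with hgvdef
  have hrv : ∀ (i : ℕ) (hi : i < p), r ⟨i, hi⟩ = rv i := by
    intro i hi
    exact congrArg r (Fin.ext (by simp; omega))
  have hgv : ∀ (j : ℕ) (hj : j < q), g ⟨j, hj⟩ = gv j := by
    intro j hj
    exact congrArg g (Fin.ext (by simp; omega))
  -- adjacency of consecutive vertices
  have hAdjChar : ∀ a c : V, G.Adj a c ↔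
      ((∃ i < p - 1, s(rv i, rv (i + 1)) = s(a, c)) ∨
       (∃ j < q - 1, s(gv j, gv (j + 1)) = s(a, c))) := by
    intro a c
    rw [hadj]
    constructor
    · rintro (⟨i, hi, he⟩ | ⟨j, hj, he⟩)
      · exact Or.inl ⟨i, by omega, by rw [← hrv i (by omega), ← hrv (i+1) (by omega)]; exact he⟩
      · exact Or.inr ⟨j, by omega, by rw [← hgv j (by omega), ← hgv (j+1) (by omega)]; exact he⟩
    · rintro (⟨i, hi, he⟩ | ⟨j, hj, he⟩)
      · exact Or.inl ⟨i, by omega, by rw [hrv i (by omega), hrv (i+1) (by omega)]; exact he⟩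
      · exact Or.inr ⟨j, by omega, by rw [hgv j (by omega), hgv (j+1) (by omega)]; exact he⟩
  have hcons : ∀ i, i < p - 1 → G.Adj (rv i) (rv (i + 1)) := by
    intro i hi
    exact (hAdjChar _ _).2 (Or.inl ⟨i, hi, rfl⟩)
  have hconsg : ∀ j, j < q - 1 → G.Adj (gv j) (gv (j + 1)) := by
    intro j hj
    exact (hAdjChar _ _).2 (Or.inr ⟨j, hj, rfl⟩)
  have hneR : ∀ i, i < p - 1 → h (rv i) ≠ h (rv (i + 1)) := fun i hi => hne _ _ (hcons i hi)
  have hneG : ∀ j, j < q - 1 → h (gv j) ≠ h (gv (j + 1)) := fun j hj => hne _ _ (hconsg j hj)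
  -- heights
  have hrt' : h (rv 0) = t := by rw [← hrv 0 (by omega)]; exact hrt
  have hrb' : h (rv (p - 1)) = b := by rw [← hrv (p-1) (by omega)]; exact hrb
  have hgb' : h (gv 0) = b := by rw [← hgv 0 (by omega)]; exact hgb
  have hgt' : h (gv (q - 1)) = t := by rw [← hgv (q-1) (by omega)]; exact hgt
  have hIooR : ∀ i, 0 < i → i < p - 1 → h (rv i) ∈ Set.Ioo b t := by
    intro i h1 h2
    rw [← hrv i (by omega)]
    exact hrint ⟨i, by omega⟩ h1 h2
  have hIooG : ∀ j, 0 < j → j < q - 1 → h (gv j) ∈ Set.Ioo b t := by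
    intro j h1 h2
    rw [← hgv j (by omega)]
    exact hgint ⟨j, by omega⟩ h1 h2
  -- injectivity on indices
  have hrvinj : ∀ i i', i ≤ p - 1 → i' ≤ p - 1 → rv i = rv i' → i = i' := by
    intro i i' hi hi' hee
    have := hrinj hee
    have := congrArg Fin.val this
    simp at this
    omega
  have hgvinj : ∀ j j', j ≤ q - 1 → j' ≤ q - 1 → gv j = gv j' → j = j' := by
    intro j j' hj hj' hee
    have := hginj hee
    have := congrArg Fin.val this
    simp at this
    omega
  have hdisj' : ∀ i j, rv i ≠ gv j := fun i j => hdisj _ _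
  -- the maximal height of a non-top vertex
  have hSne : (((Finset.univ : Finset V).erase (rv 0)).erase (gv (q - 1))).Nonempty := by
    refine ⟨rv (p - 1), ?_⟩
    rw [Finset.mem_erase, Finset.mem_erase]
    exact ⟨hdisj' _ _, fun hh => absurd (hrvinj (p-1) 0 le_rfl (by omega) hh) (by omega),
      Finset.mem_univ _⟩
  set t' := (((Finset.univ : Finset V).erase (rv 0)).erase (gv (q - 1))).sup' hSne h with ht'def
  have ht'le : ∀ v, v ≠ rv 0 → v ≠ gv (q - 1) → h v ≤ t' := by
    intro v h1 h2
    exact Finset.le_sup' h (by rw [Finset.mem_erase, Finset.mem_erase]; exact ⟨h2, h1, Finset.mem_univ _⟩)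
  have hvlt : ∀ v : V, v ≠ rv 0 → v ≠ gv (q - 1) → h v < t := by
    intro v hv2 hv1
    rcases hcover v with ⟨i, rfl⟩ | ⟨j, rfl⟩
    · have hri : r i = rv i.val := hrv i.val i.isLt
      rw [hri] at hv2 hv1 ⊢
      have hi0 : i.val ≠ 0 := fun h0 => hv2 (by rw [h0])
      by_cases hip : i.val = p - 1
      · rw [hip, hrb']; exact hbt
      · exact (hIooR i.val (by omega) (by omega : i.val < p - 1)).2
    · have hgj : g j = gv j.val := hgv j.val j.isLt
      rw [hgj] at hv1 hv2 ⊢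
      have hjq : j.val ≠ q - 1 := fun h0 => hv1 (by rw [h0])
      by_cases hj0 : j.val = 0
      · rw [hj0, hgb']; exact hbt
      · exact (hIooG j.val (by omega) (by omega : j.val < q - 1)).2
  have ht'lt : t' < t := by
    rw [ht'def, Finset.sup'_lt_iff]
    intro v hv
    rw [Finset.mem_erase, Finset.mem_erase] at hv
    exact hvlt v hv.2.1 hv.1
  have hbt' : b ≤ t' := by
    rw [← hrb']
    exact ht'le _ (fun hh => absurd (hrvinj _ _ le_rfl (by omega) hh) (by omega)) (hdisj' _ _)
  -- special levels
  set y0 : ℝ := (t' + t) / 2 with hy0def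
  have hty0 : t' < y0 := by rw [hy0def]; linarith
  have hy0t : y0 < t := by rw [hy0def]; linarith
  have hby0 : b < y0 := lt_of_le_of_lt hbt' hty0
  set yh : ℝ := (y0 + t) / 2 with hyhdef
  have hy0yh : y0 < yh := by rw [hyhdef]; linarith
  have hyht : yh < t := by rw [hyhdef]; linarith
  set y1 : ℝ := h (rv 1) with hy1def
  have hy1 : y1 ≤ t' := by
    rw [hy1def]
    exact ht'le _ (fun hh => absurd (hrvinj _ _ (by omega) (by omega) hh) (by omega)) (hdisj' _ _)
  have hy1y0 : y1 < y0 := lt_of_le_of_lt hy1 hty0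
  set y2 : ℝ := h (gv (q - 2)) with hy2def
  have hy2 : y2 ≤ t' := by
    rw [hy2def]
    exact ht'le _ (Ne.symm (hdisj' _ _)) (fun hh => absurd (hgvinj _ _ (by omega) (by omega) hh) (by omega))
  have hy2y0 : y2 < y0 := lt_of_le_of_lt hy2 hty0
  -- all vertices other than the two top ones have height ≤ t'
  have hrle : ∀ i, 1 ≤ i → i ≤ p - 1 → h (rv i) ≤ t' := by
    intro i h1 h2
    exact ht'le _ (fun hh => absurd (hrvinj _ _ (by omega) (by omega) hh) (by omega)) (hdisj' _ _)
  have hgle : ∀ j, j ≤ q - 2 → h (gv j) ≤ t' := by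
    intro j hj
    exact ht'le _ (Ne.symm (hdisj' _ _)) (fun hh => absurd (hgvinj _ _ (by omega) (by omega) hh) (by omega))
  -- the three special curves
  set ρ : ℝ → ℝ := fun y => max 0 (min 1 ((y0 - y) / (y0 - y1))) with hρdef
  set L : ℝ → ℝ := fun y => (p : ℝ) * (y - yh) / (t - yh) with hLdef
  set γ : ℝ → ℝ := fun y => max (-2) (L y) with hγdef
  have hρ0 : ∀ y, 0 ≤ ρ y := fun y => le_max_left _ _
  have hρle1 : ∀ y, ρ y ≤ 1 := by
    intro y
    rw [hρdef]
    simp only [max_le_iff]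
    exact ⟨zero_le_one, min_le_left _ _⟩
  have hρtop : ∀ y, y0 ≤ y → ρ y = 0 := by
    intro y hy
    rw [hρdef]
    simp only
    rw [min_eq_right, max_eq_left]
    · apply div_nonpos_of_nonpos_of_nonneg <;> linarith
    · refine le_trans (div_nonpos_of_nonpos_of_nonneg (by linarith) (by linarith)) zero_le_one
  have hρy1 : ρ y1 = 1 := by
    rw [hρdef]
    simp only
    rw [div_self (by linarith : y0 - y1 ≠ 0), min_self, max_eq_right zero_le_one]
  have hρeq1 : ∀ y, y1 ≤ y → ρ y = 1 → y = y1 := by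
    intro y hy hρy
    by_contra hne'
    have hlt : (y0 - y) / (y0 - y1) < 1 := by
      rw [div_lt_one (by linarith : (0:ℝ) < y0 - y1)]
      have : y1 < y := lt_of_le_of_ne hy (Ne.symm hne')
      linarith
    have : ρ y < 1 := by
      rw [hρdef]
      simp only
      rw [max_lt_iff]
      exact ⟨zero_lt_one, lt_of_le_of_lt (min_le_right _ _) hlt⟩
    linarith [hρy ▸ this]
  have htyh : t - yh ≠ 0 := by linarith
  have hLt : L t = p := by
    rw [hLdef]
    simp only
    rw [mul_div_assoc, div_self htyh, mul_one]
  have hLyh : L yh = 0 := by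
    rw [hLdef]; simp
  have hLmono : StrictMono L := by
    rw [hLdef]
    intro a a' haa
    simp only
    rw [div_lt_div_iff_of_pos_right (by linarith : (0:ℝ) < t - yh)]
    have hp0 : (0:ℝ) < p := by exact_mod_cast (by omega : 0 < p)
    nlinarith
  have hLy0 : L y0 = -p := by
    rw [hLdef]
    simp only
    rw [div_eq_iff htyh, hyhdef]
    ring
  have hγlow : ∀ y, y ≤ y0 → γ y = -2 := by
    intro y hy
    rw [hγdef]
    simp only
    rw [max_eq_left]
    have h1 : L y ≤ L y0 := hLmono.monotone hy
    rw [hLy0] at h1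
    have : (2:ℝ) ≤ p := by exact_mod_cast hp
    linarith
  have hγ2 : ∀ y, -2 ≤ γ y := fun y => le_max_left _ _
  have hγeq0 : ∀ y, γ y = 0 → y = yh := by
    intro y hy
    rw [hγdef] at hy
    simp only at hy
    have hL0 : L y = 0 := by
      rcases le_or_gt (L y) (-2) with hl | hl
      · rw [max_eq_left hl] at hy; norm_num at hy
      · rw [max_eq_right hl.le] at hy; exact hy
    have := hLmono.injective (hL0.trans hLyh.symm)
    exact this
  have hγt : γ t = p := by
    rw [hγdef]
    simp only
    rw [hLt, max_eq_right]
    have : (2:ℝ) ≤ p := by exact_mod_cast hp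
    linarith
  have hγyh : γ yh = 0 := by
    rw [hγdef]
    simp only
    rw [hLyh, max_eq_right (by norm_num)]
  have hρyh : ρ yh = 0 := hρtop yh hy0yh.le
  -- the x-coordinates
  set X : V → ℝ := fun v =>
    if hv : ∃ i : Fin p, r i = v then ((Classical.choose hv : Fin p).val : ℝ)
    else if hg : ∃ j : Fin q, g j = v then
      (if (Classical.choose hg : Fin q).val = q - 1 then (p : ℝ)
       else ((Classical.choose hg : Fin q).val : ℝ) - q)
    else 0 with hXdef
  have hXr : ∀ i : ℕ, i ≤ p - 1 → X (rv i) = i := by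
    intro i hi
    have hv : ∃ i' : Fin p, r i' = rv i := ⟨⟨i, by omega⟩, hrv i (by omega)⟩
    rw [hXdef]
    simp only
    rw [dif_pos hv]
    have hspec : r (Classical.choose hv) = rv i := Classical.choose_spec hv
    have : Classical.choose hv = ⟨i, by omega⟩ := hrinj (hspec.trans (hrv i (by omega)).symm)
    rw [this]
  have hXgl : ∀ j : ℕ, j ≤ q - 2 → X (gv j) = (j : ℝ) - q := by
    intro j hj
    have hv : ¬ ∃ i' : Fin p, r i' = gv j := by
      rintro ⟨i', hi'⟩
      exact hdisj' i'.val j (by rw [← hrv i'.val i'.isLt]; exact hi')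
    have hg' : ∃ j' : Fin q, g j' = gv j := ⟨⟨j, by omega⟩, hgv j (by omega)⟩
    rw [hXdef]
    simp only
    rw [dif_neg hv, dif_pos hg']
    have hspec : g (Classical.choose hg') = gv j := Classical.choose_spec hg'
    have hcj : Classical.choose hg' = ⟨j, by omega⟩ := hginj (hspec.trans (hgv j (by omega)).symm)
    rw [hcj, if_neg (by simp; omega)]
  have hXgt : X (gv (q - 1)) = p := by
    have hv : ¬ ∃ i' : Fin p, r i' = gv (q - 1) := by
      rintro ⟨i', hi'⟩
      exact hdisj' i'.val (q-1) (by rw [← hrv i'.val i'.isLt]; exact hi')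
    have hg' : ∃ j' : Fin q, g j' = gv (q - 1) := ⟨⟨q - 1, by omega⟩, hgv (q-1) (by omega)⟩
    rw [hXdef]
    simp only
    rw [dif_neg hv, dif_pos hg']
    have hspec : g (Classical.choose hg') = gv (q - 1) := Classical.choose_spec hg'
    have hcj : Classical.choose hg' = ⟨q - 1, by omega⟩ := hginj (hspec.trans (hgv (q-1) (by omega)).symm)
    rw [hcj, if_pos rfl]
  -- injectivity of the x-coordinate assignment
  have hXinj : Function.Injective X := by
    intro v v' heq
    rcases hcover v with ⟨i, rfl⟩ | ⟨j, rfl⟩ <;> rcases hcover v' with ⟨i', rfl⟩ | ⟨j', rfl⟩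
    · have e1 : r i = rv i.val := hrv i.val i.isLt
      have e2 : r i' = rv i'.val := hrv i'.val i'.isLt
      rw [e1, e2] at heq ⊢
      rw [hXr i.val (by omega), hXr i'.val (by omega)] at heq
      have : i.val = i'.val := by exact_mod_cast heq
      rw [this]
    · have e1 : r i = rv i.val := hrv i.val i.isLt
      have e2 : g j' = gv j'.val := hgv j'.val j'.isLt
      rw [e1, e2] at heq ⊢
      exfalso
      rw [hXr i.val (by omega)] at heq
      by_cases hj : j'.val = q - 1
      · rw [hj, hXgt] at heq
        have : i.val = p := by exact_mod_cast heq
        omega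
      · rw [hXgl j'.val (by omega)] at heq
        have h1 : (0:ℝ) ≤ (i.val : ℝ) := by positivity
        have h2 : (j'.val : ℝ) - q < 0 := by
          have : (j'.val : ℝ) < q := by exact_mod_cast j'.isLt
          linarith
        linarith
    · have e1 : g j = gv j.val := hgv j.val j.isLt
      have e2 : r i' = rv i'.val := hrv i'.val i'.isLt
      rw [e1, e2] at heq ⊢
      exfalso
      rw [hXr i'.val (by omega)] at heq
      by_cases hj : j.val = q - 1
      · rw [hj, hXgt] at heq
        have : p = i'.val := by exact_mod_cast heq
        omega
      · rw [hXgl j.val (by omega)] at heq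
        have h1 : (0:ℝ) ≤ (i'.val : ℝ) := by positivity
        have h2 : (j.val : ℝ) - q < 0 := by
          have : (j.val : ℝ) < q := by exact_mod_cast j.isLt
          linarith
        linarith
    · have e1 : g j = gv j.val := hgv j.val j.isLt
      have e2 : g j' = gv j'.val := hgv j'.val j'.isLt
      rw [e1, e2] at heq ⊢
      by_cases hj : j.val = q - 1 <;> by_cases hj' : j'.val = q - 1
      · rw [hj, hj']
      · exfalso
        rw [hj, hXgt, hXgl j'.val (by omega)] at heq
        have h2 : (j'.val : ℝ) - q < 0 := by
          have : (j'.val : ℝ) < q := by exact_mod_cast j'.isLt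
          linarith
        have : (0:ℝ) ≤ p := by positivity
        linarith
      · exfalso
        rw [hj', hXgt, hXgl j.val (by omega)] at heq
        have h2 : (j.val : ℝ) - q < 0 := by
          have : (j.val : ℝ) < q := by exact_mod_cast j.isLt
          linarith
        have : (0:ℝ) ≤ p := by positivity
        linarith
      · rw [hXgl j.val (by omega), hXgl j'.val (by omega)] at heq
        have : (j.val : ℝ) = j'.val := by linarith
        have : j.val = j'.val := by exact_mod_cast this
        rw [this]
  -- the curve assignment
  set curve : Sym2 V → ℝ → ℝ := fun e =>
    if e = s(rv 0, rv 1) then ρ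
    else if e = s(gv (q - 2), gv (q - 1)) then γ
    else lineS X h e with hcurvedef
  have hs_rg : ∀ i i' j j', s(rv i, rv i') ≠ s(gv j, gv j') := by
    intro i i' j j' hee
    rcases Sym2.eq_iff.1 hee with ⟨h1, _⟩ | ⟨h1, _⟩ <;> exact hdisj' _ _ h1
  have hcurve_r0 : curve s(rv 0, rv 1) = ρ := by
    simp [hcurvedef]
  have hcurve_gt : curve s(gv (q - 2), gv (q - 1)) = γ := by
    simp only [hcurvedef]
    rw [if_neg (Ne.symm (hs_rg 0 1 (q-2) (q-1)))]
    simp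
  have hRneR0 : ∀ i, 1 ≤ i → i + 1 ≤ p - 1 → s(rv i, rv (i+1)) ≠ s(rv 0, rv 1) := by
    intro i h1 h2 hee
    rcases Sym2.eq_iff.1 hee with ⟨ha, hb⟩ | ⟨ha, hb⟩
    · exact absurd (hrvinj _ _ (by omega) (by omega) ha) (by omega)
    · exact absurd (hrvinj _ _ (by omega) (by omega) hb) (by omega)
  have hcurve_ri : ∀ i, 1 ≤ i → i + 1 ≤ p - 1 →
      curve s(rv i, rv (i+1)) = lineS X h s(rv i, rv (i+1)) := by
    intro i h1 h2
    simp only [hcurvedef]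
    rw [if_neg (hRneR0 i h1 h2), if_neg (hs_rg i (i+1) (q-2) (q-1))]
  have hGneGt : ∀ j, j + 1 ≤ q - 2 → s(gv j, gv (j+1)) ≠ s(gv (q-2), gv (q-1)) := by
    intro j hj hee
    rcases Sym2.eq_iff.1 hee with ⟨ha, hb⟩ | ⟨ha, hb⟩
    · exact absurd (hgvinj _ _ (by omega) (by omega) ha) (by omega)
    · exact absurd (hgvinj _ _ (by omega) (by omega) ha) (by omega)
  have hcurve_gj : ∀ j, j + 1 ≤ q - 2 →
      curve s(gv j, gv (j+1)) = lineS X h s(gv j, gv (j+1)) := by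
    intro j hj
    simp only [hcurvedef]
    rw [if_neg (Ne.symm (hs_rg 0 1 j (j+1))), if_neg (hGneGt j hj)]
  -- build the drawing
  have hposinj : Function.Injective fun v => ((X v, h v) : ℝ × ℝ) :=
    fun v v' heq => hXinj (congrArg Prod.fst heq)
  have hcont : ∀ e ∈ G.edgeSet, Continuous (curve e) := by
    intro e he
    simp only [hcurvedef]
    split_ifs with h1 h2
    · exact continuous_const.max (continuous_const.min
        ((continuous_const.sub continuous_id).div_const _))
    · exact continuous_const.max
        ((continuous_const.mul (continuous_id.sub continuous_const)).div_const _)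
    · exact lineS_cont X h e
  have hend : ∀ v w : V, G.Adj v w → curve s(v, w) (h v) = X v := by
    intro v w hvw
    rcases (hAdjChar v w).1 hvw with ⟨i, hi, he⟩ | ⟨j, hj, he⟩
    · rcases Sym2.eq_iff.1 he with ⟨ha, hb⟩ | ⟨ha, hb⟩
      · rw [← ha, ← hb]
        by_cases hi0 : i = 0
        · rw [hi0, hcurve_r0, hrt', hρtop t hy0t.le, hXr 0 (by omega)]
          norm_num
        · rw [hcurve_ri i (by omega) (by omega)]
          exact lineS_end X h (hneR i hi)
      · rw [← ha, ← hb]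
        rw [show s(rv (i+1), rv i) = s(rv i, rv (i+1)) from Sym2.eq_swap]
        by_cases hi0 : i = 0
        · rw [hi0, hcurve_r0]
          rw [show h (rv (0+1)) = y1 from hy1def.symm, hρy1, hXr 1 (by omega)]
          norm_num
        · rw [hcurve_ri i (by omega) (by omega)]
          rw [show s(rv i, rv (i+1)) = s(rv (i+1), rv i) from Sym2.eq_swap]
          exact lineS_end X h (hneR i hi).symm
    · rcases Sym2.eq_iff.1 he with ⟨ha, hb⟩ | ⟨ha, hb⟩
      · rw [← ha, ← hb]
        by_cases hjt : j + 1 ≤ q - 2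
        · rw [hcurve_gj j hjt]
          exact lineS_end X h (hneG j hj)
        · have hje : j = q - 2 := by omega
          rw [hje, show q - 2 + 1 = q - 1 by omega, hcurve_gt]
          rw [show h (gv (q-2)) = y2 from hy2def.symm, hγlow y2 hy2y0.le, hXgl (q-2) (by omega)]
          rw [Nat.cast_sub (by omega)]
          push_cast
          ring
      · rw [← ha, ← hb]
        rw [show s(gv (j+1), gv j) = s(gv j, gv (j+1)) from Sym2.eq_swap]
        by_cases hjt : j + 1 ≤ q - 2
        · rw [hcurve_gj j hjt]
          rw [show s(gv j, gv (j+1)) = s(gv (j+1), gv j) from Sym2.eq_swap]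
          exact lineS_end X h (hneG j hj).symm
        · have hje : j = q - 2 := by omega
          rw [hje, show q - 2 + 1 = q - 1 by omega, hcurve_gt]
          rw [hgt', hγt, hXgt]
  set D : ReebDrawing G h := ⟨X, hposinj, curve, hcont, hend⟩ with hDdef
  have hDx : D.x = X := rfl
  have hDcurve : D.curve = curve := rfl
  refine ⟨⟨D, ?_, ?_, ?_⟩, ?_⟩
  · -- left-right order at the top
    rw [hDx]
    rw [hrv 0 (by omega), hgv (q-1) (by omega), hXr 0 (by omega), hXgt]
    exact_mod_cast (by omega : 0 < p)
  · -- left-right order at the bottom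
    rw [hDx]
    rw [hgv 0 (by omega), hrv (p-1) (by omega), hXgl 0 (by omega), hXr (p-1) (by omega)]
    have h1 : (0:ℝ) ≤ ((p-1:ℕ):ℝ) := by positivity
    have h2 : (0:ℝ) < q := by exact_mod_cast (by omega : 0 < q)
    push_cast
    linarith
  · -- exactly one crossing
    have hcast : ∀ n : ℕ, ((n+1:ℕ):ℝ) = (n:ℝ)+1 := by intro n; push_cast; ring
    -- bounds for straight red edges
    have hRbound : ∀ i, 1 ≤ i → i + 1 ≤ p - 1 → ∀ y ∈ uIcc (h (rv i)) (h (rv (i+1))),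
        (i:ℝ) ≤ curve s(rv i, rv (i+1)) y ∧ curve s(rv i, rv (i+1)) y ≤ (i:ℝ)+1 := by
      intro i h1 h2 y hy
      rw [hcurve_ri i h1 h2]
      have hm := lineS_mem X h (hneR i (by omega)) hy
      rw [hXr i (by omega), hXr (i+1) (by omega), hcast i,
        uIcc_of_le (by linarith : (i:ℝ) ≤ (i:ℝ)+1), mem_Icc] at hm
      exact hm
    have hGbound : ∀ j, j + 1 ≤ q - 2 → ∀ y ∈ uIcc (h (gv j)) (h (gv (j+1))),
        (j:ℝ) - q ≤ curve s(gv j, gv (j+1)) y ∧ curve s(gv j, gv (j+1)) y ≤ (j:ℝ)+1-q := by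
      intro j hj y hy
      rw [hcurve_gj j hj]
      have hm := lineS_mem X h (hneG j (by omega)) hy
      rw [hXgl j (by omega), hXgl (j+1) (by omega), hcast j,
        uIcc_of_le (by linarith : (j:ℝ) - q ≤ (j:ℝ)+1-q), mem_Icc] at hm
      exact hm
    -- endpoint detection for straight edges
    have hRleft : ∀ i, 1 ≤ i → i + 1 ≤ p - 1 → ∀ y,
        curve s(rv i, rv (i+1)) y = (i:ℝ) → y = h (rv i) := by
      intro i h1 h2 y hvv
      rw [hcurve_ri i h1 h2] at hvv
      refine lineS_eq_left (x := X) (hneR i (by omega)) ?_ ?_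
      · rw [hXr i (by omega), hXr (i+1) (by omega), hcast i]
        intro hc
        norm_num at hc
      · rw [hXr i (by omega)]
        exact hvv
    have hGright : ∀ j, j + 1 ≤ q - 2 → ∀ y,
        curve s(gv j, gv (j+1)) y = (j:ℝ)+1-q → y = h (gv (j+1)) := by
      intro j hj y hvv
      rw [hcurve_gj j hj, show s(gv j, gv (j+1)) = s(gv (j+1), gv j) from Sym2.eq_swap] at hvv
      refine lineS_eq_left (x := X) (hneG j (by omega)).symm ?_ ?_
      · rw [hXgl j (by omega), hXgl (j+1) (by omega), hcast j]
        intro hc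
        norm_num at hc
      · rw [hXgl (j+1) (by omega), hcast j]
        exact hvv
    -- master lemma : red-red pairs
    have mainRR : ∀ (pt : ℝ × ℝ) i i', i + 1 ≤ p - 1 → i' + 1 ≤ p - 1 → i < i' →
        pt ∈ D.edgeCurve (rv i) (rv (i+1)) → pt ∈ D.edgeCurve (rv i') (rv (i'+1)) →
        i' = i + 1 ∧ pt = (((i:ℝ)+1), h (rv (i+1))) := by
      intro pt i i' hi hi' hii ⟨hy1, hx1⟩ ⟨hy2, hx2⟩
      rw [hDcurve] at hx1 hx2
      have hub : pt.1 ≤ (i:ℝ) + 1 := by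
        by_cases hi0 : i = 0
        · subst hi0
          rw [hx1, hcurve_r0]
          exact le_trans (hρle1 _) (by norm_num)
        · rw [hx1]
          exact (hRbound i (by omega) hi _ hy1).2
      have hlb : (i':ℝ) ≤ pt.1 := by
        rw [hx2]
        exact (hRbound i' (by omega) hi' _ hy2).1
      have hii' : i' = i + 1 := by
        have : (i':ℝ) ≤ (i:ℝ) + 1 := le_trans hlb hub
        have : i' ≤ i + 1 := by exact_mod_cast this.trans (le_of_eq (hcast i).symm)
        omega
      subst hii'
      have hpt1 : pt.1 = (i:ℝ) + 1 := le_antisymm hub (by rw [← hcast i]; exact_mod_cast hlb)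
      have hpt2 : pt.2 = h (rv (i+1)) := by
        apply hRleft (i+1) (by omega) hi' pt.2
        rw [← hx2, hpt1, hcast i]
      exact ⟨rfl, Prod.ext hpt1 hpt2⟩
    -- master lemma : green-green pairs
    have mainGG : ∀ (pt : ℝ × ℝ) j j', j + 1 ≤ q - 1 → j' + 1 ≤ q - 1 → j < j' →
        pt ∈ D.edgeCurve (gv j) (gv (j+1)) → pt ∈ D.edgeCurve (gv j') (gv (j'+1)) →
        j' = j + 1 ∧ pt = (((j:ℝ)+1-q), h (gv (j+1))) := by
      intro pt j j' hj hj' hjj ⟨hy1, hx1⟩ ⟨hy2, hx2⟩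
      rw [hDcurve] at hx1 hx2
      have hjq : j + 1 ≤ q - 2 := by omega
      have hub : pt.1 ≤ (j:ℝ) + 1 - q := by
        rw [hx1]
        exact (hGbound j hjq _ hy1).2
      have hlb : (j':ℝ) - q ≤ pt.1 := by
        by_cases hj'q : j' + 1 ≤ q - 2
        · rw [hx2]
          exact (hGbound j' hj'q _ hy2).1
        · have hj'e : j' = q - 2 := by omega
          subst hj'e
          rw [hx2, show q - 2 + 1 = q - 1 from by omega, hcurve_gt]
          have : ((q:ℝ) - 2) - q = -2 := by ring
          have hc2 : ((q-2:ℕ):ℝ) - q = -2 := by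
            rw [Nat.cast_sub (by omega)]
            push_cast
            ring
          rw [hc2]
          exact hγ2 _
      have hjj' : j' = j + 1 := by
        have h1 : (j':ℝ) - q ≤ (j:ℝ) + 1 - q := le_trans hlb hub
        have : (j':ℝ) ≤ (j:ℝ) + 1 := by linarith
        have : j' ≤ j + 1 := by exact_mod_cast this.trans (le_of_eq (hcast j).symm)
        omega
      subst hjj'
      have hpt1 : pt.1 = (j:ℝ) + 1 - q := by
        refine le_antisymm hub ?_
        have : ((j+1:ℕ):ℝ) - q ≤ pt.1 := hlb
        rw [hcast j] at this
        linarith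
      have hpt2 : pt.2 = h (gv (j+1)) := by
        apply hGright j hjq pt.2
        rw [← hx1, hpt1]
      exact ⟨rfl, Prod.ext hpt1 hpt2⟩
    -- master lemma : red-green pairs
    have mainRG : ∀ (pt : ℝ × ℝ) i j, i + 1 ≤ p - 1 → j + 1 ≤ q - 1 →
        pt ∈ D.edgeCurve (rv i) (rv (i+1)) → pt ∈ D.edgeCurve (gv j) (gv (j+1)) →
        i = 0 ∧ j = q - 2 ∧ pt = ((0:ℝ), yh) := by
      intro pt i j hi hj ⟨hy1, hx1⟩ ⟨hy2, hx2⟩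
      rw [hDcurve] at hx1 hx2
      have hrlb : (0:ℝ) ≤ pt.1 := by
        by_cases hi0 : i = 0
        · subst hi0
          rw [hx1, hcurve_r0]
          exact hρ0 _
        · rw [hx1]
          refine le_trans ?_ (hRbound i (by omega) hi _ hy1).1
          positivity
      by_cases hjq : j + 1 ≤ q - 2
      · exfalso
        have hub : pt.1 ≤ (j:ℝ) + 1 - q := by
          rw [hx2]
          exact (hGbound j hjq _ hy2).2
        have : (j:ℝ) + 1 ≤ (q:ℝ) - 1 := by
          have : ((j+1:ℕ):ℝ) ≤ ((q-2:ℕ):ℝ) + 1 := by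
            exact_mod_cast (by omega : j + 1 ≤ (q-2) + 1)
          rw [hcast j, Nat.cast_sub (by omega)] at this
          push_cast at this
          linarith
        linarith
      · have hje : j = q - 2 := by omega
        subst hje
        rw [show q - 2 + 1 = q - 1 from by omega] at hy2 hx2
        have hγpt : pt.1 = γ pt.2 := by rw [hx2, hcurve_gt]
        -- the red edge must be the top one
        have hi0 : i = 0 := by
          by_contra hi0
          have hyle : pt.2 ≤ t' := by
            rcases mem_uIcc.1 hy1 with ⟨h1, h2⟩ | ⟨h1, h2⟩
            · exact le_trans h2 (hrle (i+1) (by omega) (by omega))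
            · exact le_trans h2 (hrle i (by omega) (by omega))
          have hg2 : γ pt.2 = -2 := hγlow _ (by linarith)
          rw [hγpt, hg2] at hrlb
          linarith
        subst hi0
        have hρpt : pt.1 = ρ pt.2 := by rw [hx1, hcurve_r0]
        rcases le_or_gt pt.2 y0 with hcase | hcase
        · exfalso
          have h1 : γ pt.2 = -2 := hγlow _ hcase
          have h2 : 0 ≤ ρ pt.2 := hρ0 _
          rw [hγpt, h1] at hrlb
          linarith
        · have hρ2 : ρ pt.2 = 0 := hρtop _ hcase.le
          have hpt1 : pt.1 = 0 := by rw [hρpt, hρ2]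
          have hyh : pt.2 = yh := hγeq0 _ (by rw [← hγpt, hpt1])
          exact ⟨rfl, rfl, Prod.ext hpt1 hyh⟩
    -- the only possible crossing
    have hq21 : q - 2 + 1 = q - 1 := by omega
    have key : ∀ (v w v' w' : V) (pt : ℝ × ℝ), D.IsCrossing pt v w v' w' →
        s(s(v, w), s(v', w')) = s(s(rv 0, rv 1), s(gv (q-2), gv (q-1))) ∧ pt = ((0:ℝ), yh) := by
      rintro v w v' w' pt ⟨hadj1, hadj2, hne12, hm1, hm2, hendpt⟩
      rcases (hAdjChar v w).1 hadj1 with ⟨i, hi, he1⟩ | ⟨j, hj, he1⟩ <;>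
        rcases (hAdjChar v' w').1 hadj2 with ⟨i', hi', he2⟩ | ⟨j', hj', he2⟩
      · -- red-red : impossible
        exfalso
        rw [← D.edgeCurve_congr he1] at hm1
        rw [← D.edgeCurve_congr he2] at hm2
        have hii : i ≠ i' := by rintro rfl; exact hne12 (he1.symm.trans he2)
        have hshare : ∀ k k', k + 1 ≤ p - 1 → k' + 1 ≤ p - 1 → k < k' →
            pt ∈ D.edgeCurve (rv k) (rv (k+1)) → pt ∈ D.edgeCurve (rv k') (rv (k'+1)) →
            (∀ u : V, (u = rv k ∨ u = rv (k+1)) → (u = rv k' ∨ u = rv (k'+1)) →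
              pt ≠ D.pos u) → False := by
          intro k k' hk hk' hkk hmm1 hmm2 hhend
          obtain ⟨hee, hpt⟩ := mainRR pt k k' (by omega) (by omega) hkk hmm1 hmm2
          refine hhend (rv (k+1)) (Or.inr rfl) (by rw [hee]; exact Or.inl rfl) ?_
          rw [hpt, ReebDrawing.pos, hDx, hXr (k+1) (by omega), hcast k]
        rcases lt_or_gt_of_ne hii with hlt | hgt
        · refine hshare i i' (by omega) (by omega) hlt hm1 hm2 ?_
          intro u hu1 hu2
          exact hendpt u ((or_congr_of_sym2 he1).1 hu1) ((or_congr_of_sym2 he2).1 hu2)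
        · refine hshare i' i (by omega) (by omega) hgt hm2 hm1 ?_
          intro u hu1 hu2
          exact hendpt u ((or_congr_of_sym2 he1).1 hu2) ((or_congr_of_sym2 he2).1 hu1)
      · -- red-green : the crossing
        rw [← D.edgeCurve_congr he1] at hm1
        rw [← D.edgeCurve_congr he2] at hm2
        obtain ⟨hi0, hje, hpt⟩ := mainRG pt i j' (by omega) (by omega) hm1 hm2
        subst hi0
        subst hje
        rw [← he1, ← he2, hq21]
        exact ⟨rfl, hpt⟩
      · -- green-red
        rw [← D.edgeCurve_congr he1] at hm1
        rw [← D.edgeCurve_congr he2] at hm2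
        obtain ⟨hi0, hje, hpt⟩ := mainRG pt i' j (by omega) (by omega) hm2 hm1
        subst hi0
        subst hje
        rw [← he1, ← he2, hq21]
        exact ⟨Sym2.eq_swap, hpt⟩
      · -- green-green : impossible
        exfalso
        rw [← D.edgeCurve_congr he1] at hm1
        rw [← D.edgeCurve_congr he2] at hm2
        have hjj : j ≠ j' := by rintro rfl; exact hne12 (he1.symm.trans he2)
        have hshare : ∀ k k', k + 1 ≤ q - 1 → k' + 1 ≤ q - 1 → k < k' →
            pt ∈ D.edgeCurve (gv k) (gv (k+1)) → pt ∈ D.edgeCurve (gv k') (gv (k'+1)) →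
            (∀ u : V, (u = gv k ∨ u = gv (k+1)) → (u = gv k' ∨ u = gv (k'+1)) →
              pt ≠ D.pos u) → False := by
          intro k k' hk hk' hkk hmm1 hmm2 hhend
          obtain ⟨hee, hpt⟩ := mainGG pt k k' (by omega) (by omega) hkk hmm1 hmm2
          refine hhend (gv (k+1)) (Or.inr rfl) (by rw [hee]; exact Or.inl rfl) ?_
          rw [hpt, ReebDrawing.pos, hDx, hXgl (k+1) (by omega), hcast k]
        rcases lt_or_gt_of_ne hjj with hlt | hgt
        · refine hshare j j' (by omega) (by omega) hlt hm1 hm2 ?_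
          intro u hu1 hu2
          exact hendpt u ((or_congr_of_sym2 he1).1 hu1) ((or_congr_of_sym2 he2).1 hu2)
        · refine hshare j' j (by omega) (by omega) hgt hm2 hm1 ?_
          intro u hu1 hu2
          exact hendpt u ((or_congr_of_sym2 he1).1 hu2) ((or_congr_of_sym2 he2).1 hu1)
    -- conclude : the crossing set is a singleton
    show D.crossingSet.encard = 1
    rw [Set.encard_eq_one]
    refine ⟨(s(s(rv 0, rv 1), s(gv (q-2), gv (q-1))), ((0:ℝ), yh)), ?_⟩
    ext ⟨e2, pt⟩
    simp only [ReebDrawing.crossingSet, Set.mem_setOf_eq, Set.mem_singleton_iff, Prod.mk.injEq]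
    constructor
    · rintro ⟨v, w, v', w', he2eq, hcr⟩
      obtain ⟨h1, h2⟩ := key v w v' w' pt hcr
      exact ⟨he2eq.trans h1, h2⟩
    · rintro ⟨rfl, rfl⟩
      refine ⟨rv 0, rv 1, gv (q-2), gv (q-1), rfl, hcons 0 (by omega), ?_, hs_rg 0 1 (q-2) (q-1), ?_, ?_, ?_⟩
      · have := hconsg (q-2) (by omega)
        rwa [hq21] at this
      · -- membership in the red top edge
        refine ⟨?_, ?_⟩
        · rw [hrt', ← hy1def, mem_uIcc]
          right
          constructor <;> linarith
        · rw [hDcurve, hcurve_r0, hρyh]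
      · -- membership in the green top edge
        refine ⟨?_, ?_⟩
        · rw [hgt', ← hy2def, mem_uIcc]
          left
          constructor <;> linarith
        · rw [hDcurve, hcurve_gt, hγyh]
      · intro u hu1 hu2
        rcases hu1 with rfl | rfl <;> rcases hu2 with h2 | h2 <;> exact absurd h2 (hdisj' _ _)
  · -- lower bound
    intro E htopE hbotE
    show 1 ≤ E.crossingSet.encard
    rw [Set.one_le_encard_iff_nonempty]
    by_contra hemp
    rw [Set.not_nonempty_iff_eq_empty] at hemp
    have hnc : ∀ (vv ww vv' ww' : V) (pt : ℝ × ℝ), ¬ E.IsCrossing pt vv ww vv' ww' := by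
      intro vv ww vv' ww' pt hcr
      have hmm : (s(s(vv, ww), s(vv', ww')), pt) ∈ E.crossingSet := ⟨vv, ww, vv', ww', rfl, hcr⟩
      rw [hemp] at hmm
      exact hmm
    have htopE' : E.x (rv 0) < E.x (gv (q - 1)) := by
      rw [← hrv 0 (by omega), ← hgv (q-1) (by omega)]
      exact htopE
    have hbotE' : E.x (gv 0) < E.x (rv (p - 1)) := by
      rw [← hgv 0 (by omega), ← hrv (p-1) (by omega)]
      exact hbotE
    set c : ℕ → ℝ → ℝ := fun i => E.curve s(rv i, rv (i+1)) with hcdef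
    set d : ℕ → ℝ → ℝ := fun j => E.curve s(gv j, gv (j+1)) with hddef2
    set lo : ℕ → ℝ := fun i => min (h (rv i)) (h (rv (i+1))) with hlodef
    set hgh : ℕ → ℝ := fun i => max (h (rv i)) (h (rv (i+1))) with hghdef
    set lo' : ℕ → ℝ := fun j => min (h (gv j)) (h (gv (j+1))) with hlo'def
    set hgh' : ℕ → ℝ := fun j => max (h (gv j)) (h (gv (j+1))) with hgh'def
    have hlohgh : ∀ i, i < p - 1 → lo i < hgh i := fun i h' => min_lt_max.2 (hneR i h')
    have hlohgh' : ∀ j, j < q - 1 → lo' j < hgh' j := fun j h' => min_lt_max.2 (hneG j h')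
    have hccont : ∀ i, i < p - 1 → Continuous (c i) := by
      intro i h'
      exact E.curve_cont _ ((SimpleGraph.mem_edgeSet G).2 (hcons i h'))
    have hdcont : ∀ j, j < q - 1 → Continuous (d j) := by
      intro j h'
      exact E.curve_cont _ ((SimpleGraph.mem_edgeSet G).2 (hconsg j h'))
    have hcend1 : ∀ i, i < p - 1 → c i (h (rv i)) = E.x (rv i) :=
      fun i h' => E.curve_end _ _ (hcons i h')
    have hcend2 : ∀ i, i < p - 1 → c i (h (rv (i+1))) = E.x (rv (i+1)) := by
      intro i h'
      have := E.curve_end (rv (i+1)) (rv i) (hcons i h').symm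
      rwa [show s(rv (i+1), rv i) = s(rv i, rv (i+1)) from Sym2.eq_swap] at this
    have hdend1 : ∀ j, j < q - 1 → d j (h (gv j)) = E.x (gv j) :=
      fun j h' => E.curve_end _ _ (hconsg j h')
    have hdend2 : ∀ j, j < q - 1 → d j (h (gv (j+1))) = E.x (gv (j+1)) := by
      intro j h'
      have := E.curve_end (gv (j+1)) (gv j) (hconsg j h').symm
      rwa [show s(gv (j+1), gv j) = s(gv j, gv (j+1)) from Sym2.eq_swap] at this
    -- no red-green intersections at any common height
    have NI : ∀ i j, i < p - 1 → j < q - 1 → ∀ y, lo i ≤ y → y ≤ hgh i → lo' j ≤ y →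
        y ≤ hgh' j → c i y ≠ d j y := by
      intro i j hi' hj' y h1 h2 h3 h4 heq
      apply hnc (rv i) (rv (i+1)) (gv j) (gv (j+1)) (c i y, y)
      refine ⟨hcons i hi', hconsg j hj', hs_rg i (i+1) j (j+1), ⟨mem_uIcc_minmax h1 h2, rfl⟩,
        ⟨mem_uIcc_minmax h3 h4, heq⟩, ?_⟩
      intro u hu1 hu2
      rcases hu1 with rfl | rfl <;> rcases hu2 with h5 | h5 <;> exact absurd h5 (hdisj' _ _)
    -- sign persistence on common closed spans
    have hsign : ∀ i j, i < p - 1 → j < q - 1 → ∀ y z, lo i ≤ y → y ≤ hgh i → lo' j ≤ y →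
        y ≤ hgh' j → lo i ≤ z → z ≤ hgh i → lo' j ≤ z → z ≤ hgh' j →
        ((c i y < d j y) ↔ (c i z < d j z)) := by
      intro i j hi' hj' y z hy1 hy2 hy3 hy4 hz1 hz2 hz3 hz4
      have hf : ContinuousOn (fun u => d j u - c i u) (Set.uIcc y z) :=
        ((hdcont j hj').sub (hccont i hi')).continuousOn
      have h0 : ∀ u ∈ Set.uIcc y z, d j u - c i u ≠ 0 := by
        intro u hu
        obtain ⟨hu1, hu2⟩ := uIcc_minmax hu
        refine sub_ne_zero.2 (Ne.symm (NI i j hi' hj' u ?_ ?_ ?_ ?_))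
        · exact le_trans (le_min hy1 hz1) hu1
        · exact le_trans hu2 (max_le hy2 hz2)
        · exact le_trans (le_min hy3 hz3) hu1
        · exact le_trans hu2 (max_le hy4 hz4)
      have hiff := sign_const hf h0
      constructor
      · intro hlt
        exact sub_pos.1 (hiff.1 (sub_pos.2 hlt))
      · intro hlt
        exact sub_pos.1 (hiff.2 (sub_pos.2 hlt))
    set Par : ℝ → ZMod 2 := fun y => ∑ i ∈ Finset.range (p-1), ∑ j ∈ Finset.range (q-1),
      (if lo i < y ∧ y ≤ hgh i then (1:ZMod 2) else 0) *
      ((if lo' j < y ∧ y ≤ hgh' j then (1:ZMod 2) else 0) *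
       (if c i y < d j y then (1:ZMod 2) else 0)) with hPardef
    -- separation of vertex heights
    have hδsepAll : ∀ y₀ : ℝ, ∃ δ > 0, ∀ v : V, h v ≠ y₀ → δ ≤ |h v - y₀| := by
      intro y₀
      set T := (Finset.univ.image (fun v : V => |h v - y₀|)).filter (fun z => 0 < z) with hTdef
      by_cases hT : T.Nonempty
      · refine ⟨T.min' hT, (Finset.mem_filter.1 (T.min'_mem hT)).2, ?_⟩
        intro v hv
        apply T.min'_le
        rw [hTdef, Finset.mem_filter]
        exact ⟨Finset.mem_image_of_mem _ (Finset.mem_univ v), abs_pos.2 (sub_ne_zero.2 hv)⟩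
      · refine ⟨1, one_pos, fun v hv => absurd ?_ hT⟩
        refine ⟨|h v - y₀|, ?_⟩
        rw [hTdef, Finset.mem_filter]
        exact ⟨Finset.mem_image_of_mem _ (Finset.mem_univ v), abs_pos.2 (sub_ne_zero.2 hv)⟩
    -- local constancy of the parity function
    have htrans : ∀ y₀, b < y₀ → y₀ < t → ∃ δ > 0, ∀ y, |y - y₀| < δ → Par y = Par y₀ := by
      intro y₀ hby₀ hy₀t
      obtain ⟨δ, hδpos, hδsep⟩ := hδsepAll y₀
      refine ⟨δ, hδpos, ?_⟩
      intro y hyδ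
      obtain ⟨hyy1, hyy2⟩ := abs_lt.1 hyδ
      have hsepv : ∀ v : V, h v = y₀ ∨ δ ≤ |h v - y₀| :=
        fun v => (em (h v = y₀)).imp_right (hδsep v)
      have hseplo : ∀ i : ℕ, lo i = y₀ ∨ δ ≤ |lo i - y₀| := by
        intro i
        rcases min_choice (h (rv i)) (h (rv (i+1))) with he | he
        · rw [show lo i = h (rv i) from he]
          exact hsepv _
        · rw [show lo i = h (rv (i+1)) from he]
          exact hsepv _
      have hsephgh : ∀ i : ℕ, hgh i = y₀ ∨ δ ≤ |hgh i - y₀| := by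
        intro i
        rcases max_choice (h (rv i)) (h (rv (i+1))) with he | he
        · rw [show hgh i = h (rv i) from he]
          exact hsepv _
        · rw [show hgh i = h (rv (i+1)) from he]
          exact hsepv _
      have hseplo' : ∀ j : ℕ, lo' j = y₀ ∨ δ ≤ |lo' j - y₀| := by
        intro j
        rcases min_choice (h (gv j)) (h (gv (j+1))) with he | he
        · rw [show lo' j = h (gv j) from he]
          exact hsepv _
        · rw [show lo' j = h (gv (j+1)) from he]
          exact hsepv _
      have hsephgh' : ∀ j : ℕ, hgh' j = y₀ ∨ δ ≤ |hgh' j - y₀| := by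
        intro j
        rcases max_choice (h (gv j)) (h (gv (j+1))) with he | he
        · rw [show hgh' j = h (gv j) from he]
          exact hsepv _
        · rw [show hgh' j = h (gv (j+1)) from he]
          exact hsepv _
      rcases le_or_gt y y₀ with hc | hc
      · -- below y₀ : the span sets agree with those at y₀
        simp only [hPardef]
        refine Finset.sum_congr rfl (fun i hi2 => Finset.sum_congr rfl (fun j hj2 => ?_))
        rw [Finset.mem_range] at hi2 hj2
        have hRiff := span_iff_low hyy1 hc (hseplo i) (hsephgh i)
        have hGiff := span_iff_low hyy1 hc (hseplo' j) (hsephgh' j)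
        by_cases hri : lo i < y₀ ∧ y₀ ≤ hgh i
        · by_cases hgj : lo' j < y₀ ∧ y₀ ≤ hgh' j
          · have hry := hRiff.2 hri
            have hgy := hGiff.2 hgj
            have hLT : (c i y < d j y) ↔ (c i y₀ < d j y₀) :=
              hsign i j hi2 hj2 y y₀ hry.1.le hry.2 hgy.1.le hgy.2
                hri.1.le hri.2 hgj.1.le hgj.2
            rw [if_pos hry, if_pos hri, if_pos hgy, if_pos hgj, if_congr hLT rfl rfl]
          · rw [if_neg (fun hh2 => hgj (hGiff.1 hh2)), if_neg hgj, zero_mul, zero_mul,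
              mul_zero, mul_zero]
        · rw [if_neg (fun hh2 => hri (hRiff.1 hh2)), if_neg hri, zero_mul, zero_mul]
      · -- above y₀ : flip the spans twice
        have hRiff : ∀ i, (lo i < y ∧ y ≤ hgh i) ↔ (lo i ≤ y₀ ∧ y₀ < hgh i) :=
          fun i => span_iff_high hyy2 hc (hseplo i) (hsephgh i)
        have hGiff : ∀ j, (lo' j < y ∧ y ≤ hgh' j) ↔ (lo' j ≤ y₀ ∧ y₀ < hgh' j) :=
          fun j => span_iff_high hyy2 hc (hseplo' j) (hsephgh' j)
        have e1 : Par y = ∑ i ∈ Finset.range (p-1),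
            (if lo i ≤ y₀ ∧ y₀ < hgh i then (1:ZMod 2) else 0) *
            ∑ j ∈ Finset.range (q-1), ((if lo' j ≤ y₀ ∧ y₀ < hgh' j then (1:ZMod 2) else 0) *
              (if c i y₀ < d j y₀ then (1:ZMod 2) else 0)) := by
          simp only [hPardef]
          refine Finset.sum_congr rfl (fun i hi2 => ?_)
          rw [← Finset.mul_sum]
          rw [Finset.mem_range] at hi2
          by_cases hri : lo i ≤ y₀ ∧ y₀ < hgh i
          · rw [if_pos (hRiff i |>.2 hri), if_pos hri]
            congr 1
            refine Finset.sum_congr rfl (fun j hj2 => ?_)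
            rw [Finset.mem_range] at hj2
            by_cases hgj : lo' j ≤ y₀ ∧ y₀ < hgh' j
            · have hry := (hRiff i).2 hri
              have hgy := (hGiff j).2 hgj
              have hLT : (c i y < d j y) ↔ (c i y₀ < d j y₀) :=
                hsign i j hi2 hj2 y y₀ hry.1.le hry.2 hgy.1.le hgy.2
                  hri.1 hri.2.le hgj.1 hgj.2.le
              rw [if_pos (hGiff j |>.2 hgj), if_pos hgj, if_congr hLT rfl rfl]
            · rw [if_neg (fun hh2 => hgj ((hGiff j).1 hh2)), if_neg hgj, zero_mul, zero_mul]
          · rw [if_neg (fun hh2 => hri ((hRiff i).1 hh2)), if_neg hri, zero_mul, zero_mul]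
        have hendsR : ∀ i, i < p - 1 →
            (h (rv i) = y₀ → c i y₀ = E.x (rv i)) ∧
            (h (rv (i+1)) = y₀ → c i y₀ = E.x (rv (i+1))) := by
          intro i h'
          exact ⟨fun hA => hA ▸ hcend1 i h', fun hA => hA ▸ hcend2 i h'⟩
        have hendsG : ∀ j, j < q - 1 →
            (h (gv j) = y₀ → d j y₀ = E.x (gv j)) ∧
            (h (gv (j+1)) = y₀ → d j y₀ = E.x (gv (j+1))) := by
          intro j h'
          exact ⟨fun hA => hA ▸ hdend1 j h', fun hA => hA ▸ hdend2 j h'⟩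
        have e2 : (∑ i ∈ Finset.range (p-1),
            (if lo i ≤ y₀ ∧ y₀ < hgh i then (1:ZMod 2) else 0) *
            ∑ j ∈ Finset.range (q-1), ((if lo' j ≤ y₀ ∧ y₀ < hgh' j then (1:ZMod 2) else 0) *
              (if c i y₀ < d j y₀ then (1:ZMod 2) else 0)))
            = ∑ i ∈ Finset.range (p-1),
            (if lo i < y₀ ∧ y₀ ≤ hgh i then (1:ZMod 2) else 0) *
            ∑ j ∈ Finset.range (q-1), ((if lo' j ≤ y₀ ∧ y₀ < hgh' j then (1:ZMod 2) else 0) *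
              (if c i y₀ < d j y₀ then (1:ZMod 2) else 0)) := by
          exact sum_flip_zmod2 (fun k => h (rv k)) (fun k => E.x (rv k)) (fun i => c i y₀)
            (fun ξ => ∑ j ∈ Finset.range (q-1),
              ((if lo' j ≤ y₀ ∧ y₀ < hgh' j then (1:ZMod 2) else 0) *
                (if ξ < d j y₀ then (1:ZMod 2) else 0)))
            hendsR hneR (by show h (rv 0) ≠ y₀; rw [hrt']; exact (ne_of_gt hy₀t))
            (by show h (rv (p-1)) ≠ y₀; rw [hrb']; exact (ne_of_lt hby₀))
        have e3 : (∑ i ∈ Finset.range (p-1),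
            (if lo i < y₀ ∧ y₀ ≤ hgh i then (1:ZMod 2) else 0) *
            ∑ j ∈ Finset.range (q-1), ((if lo' j ≤ y₀ ∧ y₀ < hgh' j then (1:ZMod 2) else 0) *
              (if c i y₀ < d j y₀ then (1:ZMod 2) else 0)))
            = ∑ j ∈ Finset.range (q-1),
            (if lo' j ≤ y₀ ∧ y₀ < hgh' j then (1:ZMod 2) else 0) *
            ∑ i ∈ Finset.range (p-1), ((if lo i < y₀ ∧ y₀ ≤ hgh i then (1:ZMod 2) else 0) *
              (if c i y₀ < d j y₀ then (1:ZMod 2) else 0)) := by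
          rw [Finset.sum_congr rfl (fun i (_ : i ∈ Finset.range (p-1)) => Finset.mul_sum _ _ _),
            Finset.sum_comm]
          refine Finset.sum_congr rfl (fun j _ => ?_)
          rw [Finset.mul_sum]
          refine Finset.sum_congr rfl (fun i _ => ?_)
          ring
        have e4 : (∑ j ∈ Finset.range (q-1),
            (if lo' j ≤ y₀ ∧ y₀ < hgh' j then (1:ZMod 2) else 0) *
            ∑ i ∈ Finset.range (p-1), ((if lo i < y₀ ∧ y₀ ≤ hgh i then (1:ZMod 2) else 0) *
              (if c i y₀ < d j y₀ then (1:ZMod 2) else 0)))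
            = ∑ j ∈ Finset.range (q-1),
            (if lo' j < y₀ ∧ y₀ ≤ hgh' j then (1:ZMod 2) else 0) *
            ∑ i ∈ Finset.range (p-1), ((if lo i < y₀ ∧ y₀ ≤ hgh i then (1:ZMod 2) else 0) *
              (if c i y₀ < d j y₀ then (1:ZMod 2) else 0)) := by
          exact sum_flip_zmod2 (fun k => h (gv k)) (fun k => E.x (gv k)) (fun j => d j y₀)
            (fun η => ∑ i ∈ Finset.range (p-1),
              ((if lo i < y₀ ∧ y₀ ≤ hgh i then (1:ZMod 2) else 0) *
                (if c i y₀ < η then (1:ZMod 2) else 0)))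
            hendsG hneG (by show h (gv 0) ≠ y₀; rw [hgb']; exact (ne_of_lt hby₀))
            (by show h (gv (q-1)) ≠ y₀; rw [hgt']; exact (ne_of_gt hy₀t))
        have e5 : (∑ j ∈ Finset.range (q-1),
            (if lo' j < y₀ ∧ y₀ ≤ hgh' j then (1:ZMod 2) else 0) *
            ∑ i ∈ Finset.range (p-1), ((if lo i < y₀ ∧ y₀ ≤ hgh i then (1:ZMod 2) else 0) *
              (if c i y₀ < d j y₀ then (1:ZMod 2) else 0)))
            = Par y₀ := by
          simp only [hPardef]
          rw [Finset.sum_congr rfl (fun j (_ : j ∈ Finset.range (q-1)) => Finset.mul_sum _ _ _),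
            Finset.sum_comm]
          refine Finset.sum_congr rfl (fun i _ => ?_)
          refine Finset.sum_congr rfl (fun j _ => ?_)
          ring
        exact e1.trans (e2.trans (e3.trans (e4.trans e5)))
    -- minimum height of the non-bottom vertices
    have hSne2 : (((Finset.univ : Finset V).erase (rv (p-1))).erase (gv 0)).Nonempty := by
      refine ⟨rv 0, ?_⟩
      rw [Finset.mem_erase, Finset.mem_erase]
      exact ⟨hdisj' _ _, fun hh => absurd (hrvinj _ _ (by omega) le_rfl hh) (by omega),
        Finset.mem_univ _⟩
    set b' := (((Finset.univ : Finset V).erase (rv (p-1))).erase (gv 0)).inf' hSne2 h with hb'def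
    have hb'le : ∀ v, v ≠ rv (p-1) → v ≠ gv 0 → b' ≤ h v := by
      intro v h1 h2
      exact Finset.inf'_le h
        (by rw [Finset.mem_erase, Finset.mem_erase]; exact ⟨h2, h1, Finset.mem_univ _⟩)
    have hvgt : ∀ v : V, v ≠ rv (p-1) → v ≠ gv 0 → b < h v := by
      intro v hv1 hv2
      rcases hcover v with ⟨i, rfl⟩ | ⟨j, rfl⟩
      · have hri : r i = rv i.val := hrv i.val i.isLt
        rw [hri] at hv1 ⊢
        have hip : i.val ≠ p - 1 := fun h0 => hv1 (by rw [h0])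
        by_cases hi0 : i.val = 0
        · rw [hi0, hrt']
          exact hbt
        · exact (hIooR i.val (by omega) (by omega)).1
      · have hgj : g j = gv j.val := hgv j.val j.isLt
        rw [hgj] at hv2 ⊢
        have hj0 : j.val ≠ 0 := fun h0 => hv2 (by rw [h0])
        by_cases hjq : j.val = q - 1
        · rw [hjq, hgt']
          exact hbt
        · exact (hIooG j.val (by omega) (by omega)).1
    have hbb' : b < b' := by
      rw [hb'def, Finset.lt_inf'_iff]
      intro v hv
      rw [Finset.mem_erase, Finset.mem_erase] at hv
      exact hvgt v hv.2.1 hv.1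
    have hrge : ∀ i, i ≤ p - 2 → b' ≤ h (rv i) := by
      intro i h'
      exact hb'le _ (fun hh => absurd (hrvinj _ _ (by omega) le_rfl hh) (by omega)) (hdisj' _ _)
    have hgge : ∀ j, 1 ≤ j → j ≤ q - 1 → b' ≤ h (gv j) := by
      intro j h1 h2
      exact hb'le _ (Ne.symm (hdisj' _ _))
        (fun hh => absurd (hgvinj _ _ (by omega) (by omega) hh) (by omega))
    -- endpoint values of the curves
    have hq21 : q - 2 + 1 = q - 1 := by omega
    have hp21 : p - 2 + 1 = p - 1 := by omega
    have hct : c 0 t = E.x (rv 0) := by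
      rw [← hrt']
      exact hcend1 0 (by omega)
    have hdt : d (q-2) t = E.x (gv (q-1)) := by
      rw [← hgt', ← hq21]
      exact hdend2 (q-2) (by omega)
    have hcbot : c (p-2) b = E.x (rv (p-1)) := by
      rw [← hrb', ← hp21]
      exact hcend2 (p-2) (by omega)
    have hdbot : d 0 b = E.x (gv 0) := by
      rw [← hgb']
      exact hdend1 0 (by omega)
    -- near the top the red curve is strictly left of the green curve
    obtain ⟨δt, hδtpos, hδt⟩ : ∃ δt > 0, ∀ y, |y - t| < δt → c 0 y < d (q-2) y := by
      have hconttop : Continuous fun y => d (q-2) y - c 0 y :=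
        (hdcont (q-2) (by omega)).sub (hccont 0 (by omega))
      have hpos : 0 < d (q-2) t - c 0 t := by rw [hdt, hct]; linarith
      obtain ⟨δt, hδtpos, hball⟩ := Metric.continuousAt_iff.1 hconttop.continuousAt _ hpos
      refine ⟨δt, hδtpos, fun y hy => ?_⟩
      have h2 := hball (show dist y t < δt by rwa [Real.dist_eq])
      rw [Real.dist_eq] at h2
      have h3 := (abs_lt.1 h2).1
      linarith
    obtain ⟨δb, hδbpos, hδb⟩ : ∃ δb > 0, ∀ y, |y - b| < δb → d 0 y < c (p-2) y := by
      have hcontbot : Continuous fun y => c (p-2) y - d 0 y :=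
        (hccont (p-2) (by omega)).sub (hdcont 0 (by omega))
      have hpos : 0 < c (p-2) b - d 0 b := by rw [hcbot, hdbot]; linarith
      obtain ⟨δb, hδbpos, hball⟩ := Metric.continuousAt_iff.1 hcontbot.continuousAt _ hpos
      refine ⟨δb, hδbpos, fun y hy => ?_⟩
      have h2 := hball (show dist y b < δb by rwa [Real.dist_eq])
      rw [Real.dist_eq] at h2
      have h3 := (abs_lt.1 h2).1
      linarith
    -- the two sample levels
    set ytop := (max t' (t - δt) + t) / 2 with hytopdef
    have hMt : max t' (t - δt) < t := max_lt ht'lt (by linarith)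
    have hytopM : max t' (t - δt) < ytop := by rw [hytopdef]; linarith
    have hytopt : ytop < t := by rw [hytopdef]; linarith
    have htytop : t' < ytop := lt_of_le_of_lt (le_max_left _ _) hytopM
    have hbytop : b < ytop := lt_of_le_of_lt hbt' htytop
    have hytopδ : |ytop - t| < δt := by
      rw [abs_of_neg (by linarith : ytop - t < 0)]
      have := le_max_right t' (t - δt)
      linarith
    set ybot := (b + min b' (b + δb)) / 2 with hybotdef
    have hmb : b < min b' (b + δb) := lt_min hbb' (by linarith)
    have hybot1 : b < ybot := by rw [hybotdef]; linarith
    have hybot2 : ybot < min b' (b + δb) := by rw [hybotdef]; linarith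
    have hybotb' : ybot < b' := lt_of_lt_of_le hybot2 (min_le_left _ _)
    have hb't : b' ≤ t := by
      have h1 : b' ≤ h (rv 0) :=
        hb'le _ (fun hh => absurd (hrvinj _ _ (by omega) le_rfl hh) (by omega)) (hdisj' _ _)
      rwa [hrt'] at h1
    have hybott : ybot < t := lt_of_lt_of_le hybotb' hb't
    have hybotδ : |ybot - b| < δb := by
      rw [abs_of_pos (by linarith : 0 < ybot - b)]
      have := min_le_right b' (b + δb)
      linarith
    -- Par at the top level is 1
    have hrv1y1 : h (rv 1) = y1 := hy1def.symm
    have hpull : ∀ y' : ℝ, (∑ i ∈ Finset.range (p-1), ∑ j ∈ Finset.range (q-1),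
        (if lo i < y' ∧ y' ≤ hgh i then (1:ZMod 2) else 0) *
        ((if lo' j < y' ∧ y' ≤ hgh' j then (1:ZMod 2) else 0) *
         (if c i y' < d j y' then (1:ZMod 2) else 0)))
        = ∑ i ∈ Finset.range (p-1), (if lo i < y' ∧ y' ≤ hgh i then (1:ZMod 2) else 0) *
          ∑ j ∈ Finset.range (q-1), ((if lo' j < y' ∧ y' ≤ hgh' j then (1:ZMod 2) else 0) *
           (if c i y' < d j y' then (1:ZMod 2) else 0)) := by
      intro y'
      exact Finset.sum_congr rfl (fun i _ => (Finset.mul_sum _ _ _).symm)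
    have hPartop : Par ytop = 1 := by
      simp only [hPardef]
      have hzero : ∀ i ∈ Finset.range (p-1), i ≠ 0 →
          (if lo i < ytop ∧ ytop ≤ hgh i then (1:ZMod 2) else 0) *
          ∑ j ∈ Finset.range (q-1), ((if lo' j < ytop ∧ ytop ≤ hgh' j then (1:ZMod 2) else 0) *
            (if c i ytop < d j ytop then (1:ZMod 2) else 0)) = 0 := by
        intro i hi2 hi0
        rw [Finset.mem_range] at hi2
        rw [if_neg, zero_mul]
        rintro ⟨-, hsp2⟩
        have : hgh i ≤ t' := max_le (hrle i (by omega) (by omega)) (hrle (i+1) (by omega) (by omega))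
        linarith
      rw [hpull ytop]
      rw [Finset.sum_eq_single_of_mem (M := ZMod 2) 0
        (Finset.mem_range.2 (show 0 < p - 1 by omega)) hzero]
      have hzero2 : ∀ j ∈ Finset.range (q-1), j ≠ q - 2 →
          ((if lo' j < ytop ∧ ytop ≤ hgh' j then (1:ZMod 2) else 0) *
            (if c 0 ytop < d j ytop then (1:ZMod 2) else 0)) = 0 := by
        intro j hj2 hj0
        rw [Finset.mem_range] at hj2
        have hns : ¬ (lo' j < ytop ∧ ytop ≤ hgh' j) := by
          rintro ⟨-, hsp2⟩
          have : hgh' j ≤ t' := max_le (hgle j (by omega)) (hgle (j+1) (by omega))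
          linarith
        rw [if_neg hns, zero_mul]
      rw [Finset.sum_eq_single_of_mem (M := ZMod 2) (q-2)
        (Finset.mem_range.2 (show q - 2 < q - 1 by omega)) hzero2]
      have hsp1 : lo 0 < ytop ∧ ytop ≤ hgh 0 := by
        constructor
        · have h1 : lo 0 ≤ h (rv 1) := min_le_right _ _
          rw [hrv1y1] at h1
          linarith
        · have h1 : h (rv 0) ≤ hgh 0 := le_max_left _ _
          rw [hrt'] at h1
          linarith
      have hsp2 : lo' (q-2) < ytop ∧ ytop ≤ hgh' (q-2) := by
        have hgvq : h (gv (q - 2 + 1)) = t := by rw [hq21, hgt']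
        constructor
        · have h1 : lo' (q-2) ≤ h (gv (q-2)) := min_le_left _ _
          have h2 : h (gv (q-2)) ≤ t' := hgle (q-2) le_rfl
          linarith
        · have h1 : h (gv (q - 2 + 1)) ≤ hgh' (q-2) := le_max_right _ _
          rw [hgvq] at h1
          linarith
      rw [if_pos hsp1, if_pos hsp2, if_pos (hδt ytop hytopδ), one_mul, one_mul]
    -- Par at the bottom level is 0
    have hParbot : Par ybot = 0 := by
      simp only [hPardef]
      have hrvp : h (rv (p - 2 + 1)) = b := by rw [hp21, hrb']
      have hzero : ∀ i ∈ Finset.range (p-1), i ≠ p - 2 →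
          (if lo i < ybot ∧ ybot ≤ hgh i then (1:ZMod 2) else 0) *
          ∑ j ∈ Finset.range (q-1), ((if lo' j < ybot ∧ ybot ≤ hgh' j then (1:ZMod 2) else 0) *
            (if c i ybot < d j ybot then (1:ZMod 2) else 0)) = 0 := by
        intro i hi2 hi0
        rw [Finset.mem_range] at hi2
        rw [if_neg, zero_mul]
        rintro ⟨hsp1, -⟩
        have h1 : b' ≤ lo i := le_min (hrge i (by omega)) (hrge (i+1) (by omega))
        linarith
      rw [hpull ybot]
      rw [Finset.sum_eq_single_of_mem (M := ZMod 2) (p-2)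
        (Finset.mem_range.2 (show p - 2 < p - 1 by omega)) hzero]
      have hzero2 : ∀ j ∈ Finset.range (q-1), j ≠ 0 →
          ((if lo' j < ybot ∧ ybot ≤ hgh' j then (1:ZMod 2) else 0) *
            (if c (p-2) ybot < d j ybot then (1:ZMod 2) else 0)) = 0 := by
        intro j hj2 hj0
        rw [Finset.mem_range] at hj2
        have hns : ¬ (lo' j < ybot ∧ ybot ≤ hgh' j) := by
          rintro ⟨hsp1, -⟩
          have h1 : b' ≤ lo' j :=
            le_min (hgge j (by omega) (by omega)) (hgge (j+1) (by omega) (by omega))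
          linarith
        rw [if_neg hns, zero_mul]
      rw [Finset.sum_eq_single_of_mem (M := ZMod 2) 0
        (Finset.mem_range.2 (show 0 < q - 1 by omega)) hzero2]
      have hnlt : ¬ (c (p-2) ybot < d 0 ybot) := not_lt.2 (le_of_lt (hδb ybot hybotδ))
      rw [if_neg hnlt, mul_zero, mul_zero]
    -- the parity function is locally constant on the open strip, hence constant
    have hlc : IsLocallyConstant (fun z : (Set.Ioo b t) => Par z.val) := by
      rw [IsLocallyConstant.iff_exists_open]
      intro x
      obtain ⟨δ, hδpos, hδ⟩ := htrans x.val x.2.1 x.2.2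
      refine ⟨Subtype.val ⁻¹' Metric.ball x.val δ,
        Metric.isOpen_ball.preimage continuous_subtype_val, ?_, ?_⟩
      · show x.val ∈ Metric.ball x.val δ
        exact Metric.mem_ball_self hδpos
      · intro x' hx'
        exact hδ x'.val (by simpa [Real.dist_eq] using (show dist x'.val x.val < δ from hx'))
    haveI : PreconnectedSpace (Set.Ioo b t) := Subtype.preconnectedSpace isPreconnected_Ioo
    have hcontra := hlc.apply_eq_of_preconnectedSpace ⟨ytop, hbytop, hytopt⟩ ⟨ybot, hybot1, hybott⟩
    simp only at hcontra
    rw [hPartop, hParbot] at hcontra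
    exact absurd hcontra (by decide)
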